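/- Let β ∈ (0,1] and x ≥ 1. Then (1−β)(x−1) − x^{1−β/2} + x^{β/2} ≥ 0. -/

import Mathlib

lemma cosh_mono_aux (u v : ℝ) (h0 : -v ≤ u) (huv : u ≤ v) :
    Real.exp u + Real.exp (-u) ≤ Real.exp v + Real.exp (-v) := by
  have h1 : Real.exp v = Real.exp u * Real.exp (v - u) := by
    rw [← Real.exp_add]; congr 1; ring
  have h2 : Real.exp (-u) = Real.exp (-v) * Real.exp (v - u) := by
    rw [← Real.exp_add]; congr 1; ring
  have h3 : (1 : ℝ) ≤ Real.exp (v - u) := Real.one_le_exp (by linarith)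
  have h4 : Real.exp (-v) ≤ Real.exp u := Real.exp_le_exp.mpr h0
  nlinarith [Real.exp_pos u, Real.exp_pos (-v)]

lemma lemA (a s : ℝ) (ha0 : 0 ≤ a) (ha1 : a ≤ 1) (hs : 0 ≤ s) :
    Real.exp (a * s) - Real.exp (-(a * s)) ≤ a * (Real.exp s - Real.exp (-s)) := by
  set F : ℝ → ℝ := fun t =>
    a * (Real.exp t - Real.exp (-t)) - Real.exp (a * t) + Real.exp (-(a * t)) with hF
  have hder : ∀ t : ℝ, HasDerivAt F
      (a * (Real.exp t + Real.exp (-t)) - a * Real.exp (a * t) - a * Real.exp (-(a * t))) t := by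
    intro t
    have h1 : HasDerivAt (fun t : ℝ => Real.exp t) (Real.exp t) t := Real.hasDerivAt_exp t
    have h2 : HasDerivAt (fun t : ℝ => Real.exp (-t)) (-Real.exp (-t)) t := by
      simpa [Function.comp_def] using (Real.hasDerivAt_exp (-t)).comp t (hasDerivAt_neg t)
    have h3 : HasDerivAt (fun t : ℝ => Real.exp (a * t)) (a * Real.exp (a * t)) t := by
      simpa [mul_comm, Function.comp_def] using
        (Real.hasDerivAt_exp (a * t)).comp t ((hasDerivAt_id t).const_mul a)
    have h4 : HasDerivAt (fun t : ℝ => Real.exp (-(a * t))) (-(a * Real.exp (-(a * t)))) t := by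
      have := (Real.hasDerivAt_exp (-(a * t))).comp t
        (((hasDerivAt_id t).const_mul a).neg)
      convert this using 1 <;> first | rfl | ring
    have := (((h1.sub h2).const_mul a).sub h3).add h4
    convert this using 1 <;> first | rfl | ring
  have hmono : MonotoneOn F (Set.Ici (0 : ℝ)) := by
    apply monotoneOn_of_deriv_nonneg (convex_Ici 0)
    · exact fun t _ => (hder t).continuousAt.continuousWithinAt
    · exact fun t _ => (hder t).differentiableAt.differentiableWithinAt
    · intro t ht
      rw [interior_Ici] at ht
      rw [(hder t).deriv]
      have htpos : (0 : ℝ) < t := ht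
      have hc : Real.exp (a * t) + Real.exp (-(a * t)) ≤ Real.exp t + Real.exp (-t) := by
        apply cosh_mono_aux
        · nlinarith
        · nlinarith
      nlinarith
  have h0 : F 0 ≤ F s := hmono (Set.self_mem_Ici) hs hs
  have hF0 : F 0 = 0 := by simp [hF]
  have := hF0 ▸ h0
  simp only [hF] at this
  linarith

theorem stmt_1 (β x : ℝ) (hβ : β ∈ Set.Ioc (0:ℝ) 1) (hx : 1 ≤ x) :
    (1 - β) * (x - 1) - x ^ (1 - β / 2) + x ^ (β / 2) ≥ 0 := by
  obtain ⟨hβ0, hβ1⟩ := hβ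
  have hx0 : (0 : ℝ) < x := lt_of_lt_of_le one_pos hx
  set L := Real.log x with hL
  have hL0 : 0 ≤ L := Real.log_nonneg hx
  have hxe : Real.exp L = x := Real.exp_log hx0
  have h1 : x ^ (1 - β / 2) = Real.exp ((1 - β / 2) * L) := by
    rw [Real.rpow_def_of_pos hx0, mul_comm]
  have h2 : x ^ (β / 2) = Real.exp ((β / 2) * L) := by
    rw [Real.rpow_def_of_pos hx0, mul_comm]
  have key := lemA (1 - β) (L / 2) (by linarith) (by linarith) (by linarith)
  have hmul := mul_le_mul_of_nonneg_left key (Real.exp_nonneg (L / 2))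
  have e1 : Real.exp (L / 2) * Real.exp ((1 - β) * (L / 2)) = Real.exp ((1 - β / 2) * L) := by
    rw [← Real.exp_add]; congr 1; ring
  have e2 : Real.exp (L / 2) * Real.exp (-((1 - β) * (L / 2))) = Real.exp ((β / 2) * L) := by
    rw [← Real.exp_add]; congr 1; ring
  have e3 : Real.exp (L / 2) * Real.exp (L / 2) = x := by
    rw [← Real.exp_add, ← hxe]; congr 1; ring
  have e4 : Real.exp (L / 2) * Real.exp (-(L / 2)) = 1 := by
    rw [← Real.exp_add]; simp
  rw [h1, h2]
  nlinarith [hmul, e1, e2, e3, e4]
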